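/- arXiv:2103.01335 — 5 statements merged into one kernel-verified Lean document; each statement's English description precedes it below -/
import Mathlib

section
/- A favored candidate does not imply an individually unfairly treated candidate on the platform: there exist a finite candidate type C (one may take C = Fin 12), an injective score function score : C → ℝ, a group assignment A : C → Fin 2, a platform Finset L ⊆ Finset.univ, a number k, and Finsets S_U ⊆ Finset.univ and S_L ⊆ L each of cardinality k, where S_U is score-consistent within groups over Finset.univ and S_L is score-consistent within groups over L, such that some candidate is favored (it lies in S_L but not in S_U) while no candidate belonging to L is treated individually unfairly (no c ∈ L satisfies c ∈ S_U and c ∉ S_L). (Proposition 2) -/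
/-- A Finset `S` is score-consistent within groups over the universe `V`:
whenever `x ∈ S` and `y ∈ V` is in the same group as `x` with a strictly higher
score, `y ∈ S` as well (a representative ranking keeps each group's selected
members as its top-scored available members). -/
def ScoreConsistent {C G : Type*} (score : C → ℝ) (A : C → G)
    (V S : Finset C) : Prop :=
  ∀ x ∈ S, ∀ y ∈ V, A y = A x → score y > score x → y ∈ S

/-- **Proposition 2.** A favored candidate does not imply an individually
unfairly treated candidate on the platform: with candidates `Fin 12`, there are
an injective score, a group assignment into `Fin 2`, a platform `L`, a number
`k`, and score-consistent top-`k` selections `S_U` (from all candidates) and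
`S_L` (from `L`), such that some candidate is favored while no candidate of `L`
is treated individually unfairly. -/
theorem prop2_favored_not_implies_unfair :
    ∃ (score : Fin 12 → ℝ) (A : Fin 12 → Fin 2)
      (L S_U S_L : Finset (Fin 12)) (k : ℕ),
      Function.Injective score ∧
      L ⊆ Finset.univ ∧
      S_U ⊆ Finset.univ ∧ S_L ⊆ L ∧
      S_U.card = k ∧ S_L.card = k ∧
      ScoreConsistent score A Finset.univ S_U ∧
      ScoreConsistent score A L S_L ∧
      (∃ c, c ∈ S_L ∧ c ∉ S_U) ∧
      (∀ c ∈ L, ¬(c ∈ S_U ∧ c ∉ S_L)) := by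
  refine ⟨fun c => (c : ℕ), fun _ => 0, Finset.univ.erase 11, {11}, {10}, 1,
    ?_, Finset.subset_univ _, Finset.subset_univ _, ?_, rfl, rfl, ?_, ?_, ⟨10, ?_, ?_⟩, ?_⟩
  · intro a b h
    exact Fin.val_injective (Nat.cast_injective h)
  · decide
  · intro x hx y _ _ hy
    have hx : x = 11 := Finset.mem_singleton.mp hx
    subst hx
    have : (y : ℕ) > 11 := by simpa using hy
    omega
  · intro x hx y hyL _ hy
    have hx : x = 10 := Finset.mem_singleton.mp hx
    subst hx
    have h1 : (y : ℕ) > 10 := by simpa using hy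
    have h2 : y ≠ 11 := (Finset.mem_erase.mp hyL).1
    have : (y : ℕ) = 11 := by omega
    exact absurd (Fin.ext this) h2
  · decide
  · decide
  · decide
end

section
/- Individual unfairness implies group unfairness: let score : C → ℝ be injective, A a group assignment, L a Finset of candidates (the platform members), S_U a Finset score-consistent within groups over Finset.univ, and S_L ⊆ L a Finset score-consistent within groups over L. If some candidate c ∈ L with A c = g is treated individually unfairly (c ∈ S_U and c ∉ S_L), then group g is treated unfairly, i.e., |{x ∈ S_L : A x = g}| < |{x ∈ S_U : A x = g}|. (Lemma 1, Section 3.6.3) -/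
/-- **Lemma 1 (Section 3.6.3).** Individual unfairness implies group
unfairness: if a platform candidate `c` of group `g` lies in the universal
top-`k` `S_U` but not in the platform top-`k` `S_L`, then group `g` has
strictly fewer members in `S_L` than in `S_U`. -/
theorem lemma1_individual_unfair_implies_group_unfair
    {C G : Type*} [Fintype C] [DecidableEq C] [DecidableEq G]
    (score : C → ℝ) (hscore : Function.Injective score)
    (A : C → G) (L : Finset C)
    (S_U S_L : Finset C) (hSL : S_L ⊆ L)
    (hU : ScoreConsistent score A Finset.univ S_U)
    (hL : ScoreConsistent score A L S_L)
    (g : G) (c : C) (hcL : c ∈ L) (hcg : A c = g)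
    (hcU : c ∈ S_U) (hcnL : c ∉ S_L) :
    (S_L.filter (fun x => A x = g)).card < (S_U.filter (fun x => A x = g)).card := by
  apply Finset.card_lt_card
  constructor
  · intro x hx
    rw [Finset.mem_filter] at hx ⊢
    obtain ⟨hxS, hxg⟩ := hx
    refine ⟨?_, hxg⟩
    have hne : x ≠ c := fun h => hcnL (h ▸ hxS)
    have hsc : score c ≠ score x := fun h => hne (hscore h).symm
    rcases lt_or_gt_of_ne hsc with h | h
    · exact hU c hcU x (Finset.mem_univ x) (hxg.trans hcg.symm) h
    · exact absurd (hL x hxS c hcL (hcg.trans hxg.symm) h) hcnL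
  · intro hsub
    exact hcnL (Finset.mem_filter.mp (hsub (Finset.mem_filter.mpr ⟨hcU, hcg⟩))).1
end

section
/- An individually fair solution does not imply group fairness: there exist a finite candidate type C, an injective score function score : C → ℝ, a group assignment A : C → Fin 2, a platform Finset L ⊆ Finset.univ, a number k, and Finsets S_U ⊆ Finset.univ and S_L ⊆ L each of cardinality k, where S_U is score-consistent within groups over Finset.univ and S_L is score-consistent within groups over L, such that no candidate of L is treated individually unfairly (every c ∈ L with c ∈ S_U satisfies c ∈ S_L), yet some group g is treated unfairly, i.e., |{c ∈ S_L : A c = g}| < |{c ∈ S_U : A c = g}|. (Lemma 3, Section 3.6.5) -/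
/-- **Lemma 3 (Section 3.6.5).** An individually fair solution does not imply
group fairness: there exist a finite candidate type `Fin n`, an injective
score, a group assignment into `Fin 2`, a platform `L`, and score-consistent
top-`k` selections `S_U` (from all candidates) and `S_L` (from `L`), such that
no platform candidate is treated individually unfairly, yet some group is
treated unfairly. -/
theorem lemma3_individual_fair_not_implies_group_fair :
    ∃ (n : ℕ) (score : Fin n → ℝ) (A : Fin n → Fin 2)
      (L S_U S_L : Finset (Fin n)) (k : ℕ),
      Function.Injective score ∧
      L ⊆ Finset.univ ∧
      S_U ⊆ Finset.univ ∧ S_L ⊆ L ∧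
      S_U.card = k ∧ S_L.card = k ∧
      ScoreConsistent score A Finset.univ S_U ∧
      ScoreConsistent score A L S_L ∧
      (∀ c ∈ L, c ∈ S_U → c ∈ S_L) ∧
      (∃ g : Fin 2,
        (S_L.filter (fun c => A c = g)).card <
        (S_U.filter (fun c => A c = g)).card) := by
  refine ⟨2, fun i => -(i : ℝ), id, {1}, {0}, {1}, 1, ?_, Finset.subset_univ _,
    Finset.subset_univ _, Finset.Subset.refl _, rfl, rfl, ?_, ?_, ?_, 0, ?_⟩
  · intro a b h
    have h2 : ((a : ℕ) : ℝ) = ((b : ℕ) : ℝ) := neg_injective h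
    exact Fin.ext (Nat.cast_injective h2)
  · intro x _ y _ hA hs
    simp only [id_eq] at hA
    subst hA; exact absurd hs (lt_irrefl _)
  · intro x _ y _ hA hs
    simp only [id_eq] at hA
    subst hA; exact absurd hs (lt_irrefl _)
  · decide
  · decide
end

section
/- A group-fairness-aware solution implies individual fairness: let score : C → ℝ be injective, A a group assignment, L a Finset of candidates (the platform members), S_U a Finset score-consistent within groups over Finset.univ, and S_L ⊆ L a Finset score-consistent within groups over L. Suppose the solution is group-fair in the sense that for every group g, |{c ∈ S_L : A c = g}| ≥ min(|{c ∈ S_U : A c = g}|, |{c ∈ L : A c = g}|). Then no candidate on the platform is treated individually unfairly: for every c ∈ L, if c ∈ S_U then c ∈ S_L. (Lemma 4, Section 3.6.5) -/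
/-- **Lemma 4 (Section 3.6.5).** A group-fairness-aware solution implies
individual fairness: if for every group `g` the platform selection `S_L` has at
least `min(|{c ∈ S_U : A c = g}|, |{c ∈ L : A c = g}|)` members of group `g`,
then no platform candidate is treated individually unfairly. -/
theorem lemma4_group_fair_implies_individual_fair
    {C G : Type*} [Fintype C] [DecidableEq C] [DecidableEq G]
    (score : C → ℝ) (hscore : Function.Injective score)
    (A : C → G) (L : Finset C)
    (S_U S_L : Finset C) (hSL : S_L ⊆ L)
    (hU : ScoreConsistent score A Finset.univ S_U)
    (hL : ScoreConsistent score A L S_L)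
    (hgroupfair : ∀ g : G,
      (S_L.filter (fun c => A c = g)).card ≥
        min ((S_U.filter (fun c => A c = g)).card)
            ((L.filter (fun c => A c = g)).card)) :
    ∀ c ∈ L, c ∈ S_U → c ∈ S_L := by
  intro c hcL hcU
  by_contra hcSL
  set g := A c with hg
  set H : Finset C := (L.filter (fun x => A x = g)).filter
      (fun x => score c < score x) with hH
  -- T_L ⊆ H
  have hTL : S_L.filter (fun x => A x = g) ⊆ H := by
    intro x hx
    simp only [Finset.mem_filter] at hx
    obtain ⟨hxSL, hxg⟩ := hx
    have hxL : x ∈ L := hSL hxSL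
    have hne : score x ≠ score c := fun h => hcSL (hscore h ▸ hxSL)
    rcases lt_or_gt_of_ne hne with h | h
    · exact absurd (hL x hxSL c hcL (hg ▸ hxg.symm) h) hcSL
    · simp only [hH, Finset.mem_filter]
      exact ⟨⟨hxL, hxg⟩, h⟩
  -- H ∪ {c} ⊆ T_U and ⊆ L_g
  have hHU : insert c H ⊆ S_U.filter (fun x => A x = g) := by
    intro x hx
    rcases Finset.mem_insert.mp hx with rfl | hx
    · simp [hcU, hg]
    · simp only [hH, Finset.mem_filter] at hx
      obtain ⟨⟨_, hxg⟩, hs⟩ := hx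
      exact Finset.mem_filter.mpr ⟨hU c hcU x (Finset.mem_univ x) hxg hs, hxg⟩
  have hHL : insert c H ⊆ L.filter (fun x => A x = g) := by
    intro x hx
    rcases Finset.mem_insert.mp hx with rfl | hx
    · simp [hcL, hg]
    · simp only [hH, Finset.mem_filter] at hx
      exact Finset.mem_filter.mpr hx.1
  have hcH : c ∉ H := by simp [hH]
  have hcard : H.card + 1 = (insert c H).card := (Finset.card_insert_of_notMem hcH).symm
  have h1 : H.card + 1 ≤ (S_U.filter (fun x => A x = g)).card :=
    hcard ▸ Finset.card_le_card hHU
  have h2 : H.card + 1 ≤ (L.filter (fun x => A x = g)).card :=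
    hcard ▸ Finset.card_le_card hHL
  have := hgroupfair g
  have hle : (S_L.filter (fun x => A x = g)).card ≤ H.card := Finset.card_le_card hTL
  omega
end

section
/- Correctness of the Ideal-IFRR algorithm (projection of the universal ranking onto the platform yields an individually fair ranking): let l be a duplicate-free list of candidates (the universal representative ranking, best candidate first) and let p be a decidable predicate on candidates (membership on the platform L). For every candidate c with p c and every k, if c occurs among the first k entries of l (c ∈ l.take k), then c occurs among the first k entries of the filtered list (c ∈ (l.filter p).take k). Hence no platform member in the universal top-k is outside the Ideal-IFRR top-k. -/
/-- Correctness of the Ideal-IFRR algorithm: projecting the universal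
representative ranking `l` onto the platform (keeping only the candidates
satisfying `p`) yields an individually fair ranking. For every platform
candidate `c` and every `k`, if `c` is in the universal top-`k` (`l.take k`),
then `c` is in the Ideal-IFRR top-`k` (`(l.filter (fun x => decide (p x))).take k`). -/
theorem ideal_IFRR_individually_fair
    {C : Type*} [DecidableEq C] (l : List C) (hl : l.Nodup)
    (p : C → Prop) [DecidablePred p]
    (c : C) (hc : p c) (k : ℕ) (hck : c ∈ l.take k) :
    c ∈ (l.filter (fun x => decide (p x))).take k := by
  set f : C → Bool := fun x => decide (p x) with hf
  have h1 : c ∈ (l.take k).filter f := List.mem_filter.2 ⟨hck, by simp [hf, hc]⟩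
  have h2 : l.filter f = (l.take k).filter f ++ (l.drop k).filter f := by
    rw [← List.filter_append, List.take_append_drop]
  have hlen : ((l.take k).filter f).length ≤ k :=
    le_trans (List.length_filter_le _ _) (by simpa using List.length_take_le k l)
  rw [h2, List.take_append, List.take_of_length_le hlen]
  exact List.mem_append_left _ h1
end
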